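/- Let p be a prime, k an algebraically closed field of characteristic p, W = W(k) the ring of p-typical Witt vectors with Frobenius automorphism σ. Let A = W⟨X₁,…,X_r⟩/I be a quotient of a restricted power series ring over W by an ideal, φ : A → A a ring endomorphism with φ(ι(w)) = ι(σ(w)) for w ∈ W and φ(a) ≡ a^p (mod pA), M a finitely generated, p-adically separated and complete A-module, ψ : M → M an additive map with ψ(φ(a)·x) = a·ψ(x), and M^♯ the unique W-submodule of M which is finitely generated over W, stable under ψ with ψ bijective on it, and such that for all x ∈ M and κ ≥ 1, ψⁿ(x) ∈ M^♯ + p^κ M for n large. Suppose moreover given an additive map φ_M : M → M with ψ ∘ φ_M = id_M. Then every x ∈ M can be written in a unique way as x = c₀ + Σ_{i≥1} φ_M^{i−1}(c_i), where c₀ ∈ M^♯, ψ(c_i) = 0 for every i ≥ 1, and c_i → 0 p-adically; here the series converges in the p-adic topology of M, i.e. x − (c₀ + Σ_{i=1}^{N} φ_M^{i−1}(c_i)) → 0 p-adically as N → ∞. -/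

import Mathlib

set_option synthInstance.maxHeartbeats 1000000
set_option maxHeartbeats 1000000

/-!
Statement 11: same setting as Statements 9 and 10 (`W = W(k)` for `k`
algebraically closed of characteristic `p`, `A = W⟨X₁,…,X_r⟩/I`, `φ`, `M`,
`ψ`, and `M♯` the unique `W`-submodule of `M` furnished by Statement 9).
Given in addition an additive map `φ_M : M → M` with `ψ ∘ φ_M = id`, every
`x ∈ M` can be written in a unique way as `x = c₀ + ∑_{i≥1} φ_M^{i-1}(c_i)`
with `c₀ ∈ M♯`, `ψ(c_i) = 0` for `i ≥ 1`, `c_i → 0` `p`-adically, the series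
converging in the `p`-adic topology of `M`.
-/

/-- The ring `W⟨X₁,…,X_r⟩` of restricted power series: power series whose
coefficients tend to `0` `p`-adically. -/
def RestrictedPS (p : ℕ) (W : Type*) [CommRing W] (r : ℕ) :
    Subalgebra W (MvPowerSeries (Fin r) W) where
  carrier := {f | ∀ m : ℕ,
    {d : Fin r →₀ ℕ | ¬ (p : W) ^ m ∣ MvPowerSeries.coeff d f}.Finite}
  add_mem' := by
    intro a b ha hb m
    refine ((ha m).union (hb m)).subset ?_
    intro d hd
    by_contra h
    simp only [Set.mem_union, Set.mem_setOf_eq, not_or, not_not] at h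
    exact hd (by simpa [map_add] using dvd_add h.1 h.2)
  mul_mem' := by
    intro a b ha hb m
    refine (Set.Finite.image2 (· + ·) (ha m) (hb m)).subset ?_
    intro d hd
    simp only [Set.mem_setOf_eq] at hd
    by_contra hno
    apply hd
    rw [MvPowerSeries.coeff_mul]
    refine Finset.dvd_sum ?_
    rintro ⟨d₁, d₂⟩ hmem
    have hd12 : d₁ + d₂ = d := Finset.HasAntidiagonal.mem_antidiagonal.mp hmem
    by_cases h1 : (p : W) ^ m ∣ MvPowerSeries.coeff d₁ a
    · exact h1.mul_right _
    · by_cases h2 : (p : W) ^ m ∣ MvPowerSeries.coeff d₂ b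
      · exact h2.mul_left _
      · exact absurd (hd12 ▸ Set.mem_image2_of_mem h1 h2) hno
  algebraMap_mem' := by
    intro w m
    refine (Set.finite_singleton 0).subset ?_
    intro d hd
    simp only [Set.mem_setOf_eq] at hd
    simp only [Set.mem_singleton_iff]
    by_contra h0
    exact hd (by simp [MvPowerSeries.algebraMap_apply, MvPowerSeries.coeff_C, h0])


namespace Aux




variable {p : ℕ} [hp : Fact p.Prime] {k : Type*} [Field k] [CharP k p]

theorem coeff_mul_pow_p {n : ℕ} (z : WittVector p k) {i : ℕ} (hi : i < n) :
    (z * (p : WittVector p k) ^ n).coeff i = 0 := by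
  induction n generalizing i z with
  | zero => omega
  | succ n ih =>
    rw [pow_succ, ← mul_assoc]
    rcases i with _ | j
    · exact WittVector.mul_charP_coeff_zero _
    · rw [WittVector.mul_charP_coeff_succ]
      rw [ih z (by omega)]
      exact zero_pow hp.out.ne_zero

theorem coeff_mul_pow_p_self (z : WittVector p k) (n : ℕ) :
    (z * (p : WittVector p k) ^ n).coeff n = z.coeff 0 ^ p ^ n := by
  induction n with
  | zero => simp
  | succ n ih =>
    rw [pow_succ, ← mul_assoc, WittVector.mul_charP_coeff_succ, ih, ← pow_mul, ← pow_succ]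

variable [PerfectRing k p]

theorem pow_p_dvd_iff_coeff {n : ℕ} {x : WittVector p k} :
    (p : WittVector p k) ^ n ∣ x ↔ ∀ i < n, x.coeff i = 0 := by
  constructor
  · rintro ⟨c, rfl⟩ i hi
    rw [mul_comm]
    exact coeff_mul_pow_p c hi
  · intro h
    rcases eq_or_ne x 0 with rfl | hx
    · exact dvd_zero _
    obtain ⟨m, b, hb0, rfl⟩ := WittVector.exists_eq_pow_p_mul x hx
    by_cases hmn : n ≤ m
    · exact ⟨(p : WittVector p k) ^ (m - n) * b, by
        rw [← mul_assoc, ← pow_add, Nat.add_sub_cancel' hmn]⟩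
    · exfalso
      have h1 := h m (by omega)
      rw [mul_comm, coeff_mul_pow_p_self] at h1
      exact pow_ne_zero _ hb0 h1

theorem pow_p_dvd_sub_iff_truncate {n : ℕ} {a b : WittVector p k} :
    (p : WittVector p k) ^ n ∣ a - b ↔ WittVector.truncate n a = WittVector.truncate n b := by
  rw [pow_p_dvd_iff_coeff, ← WittVector.mem_ker_truncate, RingHom.mem_ker, map_sub,
    sub_eq_zero]

theorem witt_precomplete (f : ℕ → WittVector p k)
    (hf : ∀ j, (p : WittVector p k) ^ j ∣ f (j + 1) - f j) :
    ∃ L, ∀ j, (p : WittVector p k) ^ j ∣ L - f j := by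
  have hdvd : ∀ n m, n ≤ m → (p : WittVector p k) ^ n ∣ f m - f n := by
    intro n m hnm
    induction m with
    | zero => interval_cases n; simp
    | succ m ih =>
      rcases Nat.lt_or_ge n (m+1) with h | h
      · have h1 : (p : WittVector p k) ^ n ∣ f (m+1) - f m :=
          dvd_trans (pow_dvd_pow _ (by omega)) (hf m)
        have h2 := ih (by omega)
        simpa using dvd_add h1 h2
      · have : n = m + 1 := by omega
        subst this; simp
  refine ⟨WittVector.mk p fun i => (f (i + 1)).coeff i, fun n => ?_⟩
  rw [pow_p_dvd_sub_iff_truncate]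
  apply TruncatedWittVector.ext
  intro i
  rw [WittVector.coeff_truncate, WittVector.coeff_truncate, WittVector.coeff_mk]
  have h3 : (p : WittVector p k) ^ ((i : ℕ) + 1) ∣ f n - f ((i : ℕ) + 1) :=
    hdvd _ _ (by omega)
  rw [pow_p_dvd_sub_iff_truncate] at h3
  have := congrArg (TruncatedWittVector.coeff (⟨i, by omega⟩ : Fin ((i : ℕ)+1))) h3
  rw [WittVector.coeff_truncate, WittVector.coeff_truncate] at this
  exact this.symm



theorem module_precomplete {R : Type*} [CommRing R] (t : R)
    (hprec : ∀ f : ℕ → R, (∀ j, t ^ j ∣ f (j + 1) - f j) → ∃ L, ∀ j, t ^ j ∣ L - f j)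
    {V : Type*} [AddCommGroup V] [Module R V] [Module.Finite R V]
    (f : ℕ → V) (hf : ∀ s, ∃ z, f (s + 1) - f s = t ^ s • z) :
    ∃ L, ∀ s, ∃ z, L - f s = t ^ s • z := by
  obtain ⟨n, π, hπ⟩ := Module.Finite.exists_fin' R V
  choose z hz using hf
  choose u hu using fun s => hπ (z s)
  obtain ⟨u₀, hu₀⟩ := hπ (f 0)
  set G : ℕ → (Fin n → R) := fun s => Nat.rec u₀ (fun s prev => prev + t ^ s • u s) s with hG
  have hGsucc : ∀ s, G (s + 1) = G s + t ^ s • u s := fun s => rfl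
  have hπG : ∀ s, π (G s) = f s := by
    intro s
    induction s with
    | zero => exact hu₀
    | succ s ih =>
      rw [hGsucc, map_add, ih, map_smul, hu, ← hz]
      abel
  have hcoord : ∀ a : Fin n, ∃ La, ∀ s, t ^ s ∣ La - G s a := by
    intro a
    apply hprec
    intro j
    refine ⟨u j a, ?_⟩
    rw [hGsucc]
    simp [smul_eq_mul]
  choose Lf hLf using hcoord
  refine ⟨π Lf, fun s => ?_⟩
  have hdiv : ∃ q : Fin n → R, (Lf - G s) = t ^ s • q := by
    choose q hq using fun a => hLf a s
    exact ⟨q, funext fun a => by simp [hq a, smul_eq_mul]⟩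
  obtain ⟨q, hq⟩ := hdiv
  refine ⟨π q, ?_⟩
  rw [← hπG s, ← map_sub, hq, map_smul]



/-- Transfer of artinianness along a surjective ring hom through which the action factors. -/
theorem isArtinian_of_surjective_hom {R S Q : Type*} [CommRing R] [CommRing S] [AddCommGroup Q]
    [Module R Q] [Module S Q] (f : R →+* S) (hf : Function.Surjective f)
    (hsmul : ∀ (r : R) (q : Q), f r • q = r • q) (h : IsArtinian S Q) : IsArtinian R Q := by
  let g : Submodule R Q → Submodule S Q := fun P =>
    { carrier := P
      add_mem' := fun ha hb => P.add_mem ha hb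
      zero_mem' := P.zero_mem
      smul_mem' := by
        intro s q hq
        obtain ⟨r, rfl⟩ := hf s
        rw [hsmul]
        exact P.smul_mem r hq }
  have hg : ∀ {a b : Submodule R Q}, a < b → g a < g b := by
    intro a b hab
    rw [SetLike.lt_iff_le_and_exists] at hab ⊢
    exact ⟨hab.1, hab.2⟩
  exact ⟨Subrelation.wf (fun {a b} hab => hg hab) (InvImage.wf g h.wf)⟩

theorem isArtinian_of_torsionBy_maximal {R Q : Type*} [CommRing R] [AddCommGroup Q]
    [Module R Q] [Module.Finite R Q] {t : R} (hmax : (Ideal.span {t}).IsMaximal)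
    (htor : ∀ q : Q, t • q = 0) : IsArtinian R Q := by
  have ht : Module.IsTorsionBy R Q t := fun q => htor q
  letI : Module (R ⧸ Ideal.span {t}) Q := ht.module
  haveI : IsScalarTower R (R ⧸ Ideal.span {t}) Q :=
    Module.IsTorsionBySet.isScalarTower _
  haveI := hmax
  letI : Field (R ⧸ Ideal.span {t}) := Ideal.Quotient.field _
  haveI : Module.Finite (R ⧸ Ideal.span {t}) Q :=
    Module.Finite.of_restrictScalars_finite R _ _
  haveI : IsArtinian (R ⧸ Ideal.span {t}) Q := isArtinian_of_fg_of_artinian'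
  exact isArtinian_of_surjective_hom (Ideal.Quotient.mk (Ideal.span {t}))
    Ideal.Quotient.mk_surjective (fun r q => rfl) this

theorem isArtinian_of_torsionBy_pow_maximal {R : Type u_1} [CommRing R] {t : R}
    (hmax : (Ideal.span {t}).IsMaximal) :
    ∀ (κ : ℕ) (Q : Type u_2) (_ : AddCommGroup Q) (_ : Module R Q) (_ : Module.Finite R Q),
      (∀ q : Q, t ^ κ • q = 0) → IsArtinian R Q := by
  intro κ
  induction κ with
  | zero =>
    intro Q _ _ _ htor
    haveI : Subsingleton Q := ⟨fun a b => by
      have ha := htor a; have hb := htor b; simp only [pow_zero, one_smul] at ha hb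
      rw [ha, hb]⟩
    infer_instance
  | succ κ ih =>
    intro Q _ _ _ htor
    set S : Submodule R Q := LinearMap.range (LinearMap.lsmul R Q (t ^ κ)) with hS
    have hSfg : S.FG := by
      rw [hS, LinearMap.range_eq_map]
      exact Submodule.FG.map _ (Module.finite_def.mp ‹Module.Finite R Q›)
    haveI hfinS : Module.Finite R S := Module.Finite.iff_fg.mpr hSfg
    haveI hfinQS : Module.Finite R (Q ⧸ S) :=
      Module.Finite.of_surjective (S.mkQ) (Submodule.mkQ_surjective S)
    haveI h1 : IsArtinian R S := by
      apply isArtinian_of_torsionBy_maximal hmax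
      rintro ⟨q, hq⟩
      obtain ⟨v, rfl⟩ := hq
      apply Subtype.ext
      show t • ((LinearMap.lsmul R Q (t ^ κ)) v) = 0
      rw [LinearMap.lsmul_apply, smul_smul, ← pow_succ']
      exact htor v
    haveI h2 : IsArtinian R (Q ⧸ S) := by
      refine ih (Q ⧸ S) _ _ hfinQS ?_
      intro q
      obtain ⟨v, rfl⟩ := Submodule.mkQ_surjective S q
      rw [← map_smul]
      rw [Submodule.mkQ_apply, Submodule.Quotient.mk_eq_zero]
      exact ⟨v, rfl⟩
    exact isArtinian_of_range_eq_ker S.subtype S.mkQ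
      (by rw [Submodule.range_subtype, Submodule.ker_mkQ])



variable {R M : Type*} [CommRing R] [AddCommGroup M] [Module R M]

/-- Lemma A: if `ψ` is bijective on a f.g. submodule `N` over a Noetherian ring, `σ⁻¹`-semilinear,
and `T` is a `ψ`-stable submodule, then for `y ∈ N`, `ψ y ∈ T` implies `y ∈ T`. -/
theorem mem_of_psi_mem [IsNoetherianRing R] (σ : R ≃+* R) (ψ : M →+ M)
    (hsemi : ∀ (w : R) (x : M), ψ (σ w • x) = w • ψ x)
    (N : Submodule R M) (hfg : N.FG) (hbij : Set.BijOn ψ N N)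
    (T : Submodule R M) (hT : ∀ x ∈ T, ψ x ∈ T) :
    ∀ y ∈ N, ψ y ∈ T → y ∈ T := by
  haveI : IsNoetherian R N := isNoetherian_of_fg_of_noetherian N hfg
  -- ψ restricted to N
  have hmaps : ∀ y : N, ψ (y : M) ∈ N := fun y => hbij.mapsTo y.2
  let ψN : N →+ N := AddMonoidHom.mk' (fun y => ⟨ψ y, hmaps y⟩)
    (fun a b => Subtype.ext (by simp [map_add]))
  have hψNcoe : ∀ (y : N), ((ψN y : N) : M) = ψ (y : M) := fun y => rfl
  have hψNsurj : Function.Surjective ψN := by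
    rintro ⟨b, hb⟩
    obtain ⟨a, ha, hab⟩ := hbij.surjOn hb
    exact ⟨⟨a, ha⟩, Subtype.ext hab⟩
  have hψNsemi : ∀ (w : R) (y : N), ψN (σ w • y) = w • ψN y := by
    intro w y
    apply Subtype.ext
    rw [hψNcoe]
    show ψ ((σ w • y : N) : M) = ((w • ψN y : N) : M)
    rw [Submodule.coe_smul, Submodule.coe_smul, hsemi, hψNcoe]
  -- iterating, with w replaced by σ.symm-power
  have hψNsemi' : ∀ (w : R) (y : N), ψN (w • y) = σ.symm w • ψN y := by
    intro w y
    have := hψNsemi (σ.symm w) y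
    rwa [RingEquiv.apply_symm_apply] at this
  have hiter : ∀ (m : ℕ) (w : R) (y : N),
      (⇑ψN)^[m] (w • y) = ((⇑σ.symm)^[m] w) • (⇑ψN)^[m] y := by
    intro m
    induction m with
    | zero => intro w y; rfl
    | succ m ih =>
      intro w y
      rw [Function.iterate_succ_apply, hψNsemi', ih, ← Function.iterate_succ_apply,
        Function.iterate_succ_apply' (⇑σ.symm), ← Function.iterate_succ_apply (⇑ψN)]
  -- the increasing chain of preimages
  let CN : Submodule R N := T.comap N.subtype
  let G : ℕ → Submodule R N := fun m =>
    { carrier := {y : N | (⇑ψN)^[m] y ∈ CN}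
      add_mem' := by
        intro a b ha hb
        simp only [Set.mem_setOf_eq] at *
        rw [iterate_map_add]
        exact CN.add_mem ha hb
      zero_mem' := by
        simp only [Set.mem_setOf_eq]
        rw [iterate_map_zero]
        exact CN.zero_mem
      smul_mem' := by
        intro w y hy
        simp only [Set.mem_setOf_eq] at *
        rw [hiter]
        exact CN.smul_mem _ hy }
  have hGmono : Monotone G := by
    apply monotone_nat_of_le_succ
    intro m y hy
    show (⇑ψN)^[m+1] y ∈ CN
    rw [Function.iterate_succ_apply']
    exact hT _ hy
  obtain ⟨n₀, hn₀⟩ := monotone_stabilizes_iff_noetherian.mpr ‹IsNoetherian R N›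
    ⟨G, hGmono⟩
  -- conclude
  intro y hy hψy
  obtain ⟨z, hz⟩ := (Function.Surjective.iterate hψNsurj n₀) ⟨y, hy⟩
  have h1 : z ∈ G (n₀ + 1) := by
    show (⇑ψN)^[n₀+1] z ∈ CN
    rw [Function.iterate_succ_apply', hz]
    show ψ ((⟨y, hy⟩ : N) : M) ∈ T
    exact hψy
  have h2 : z ∈ G n₀ := by
    have := hn₀ (n₀ + 1) (by omega)
    rw [show (⟨G, hGmono⟩ : ℕ →o Submodule R N) n₀ = G n₀ from rfl,
      show (⟨G, hGmono⟩ : ℕ →o Submodule R N) (n₀+1) = G (n₀+1) from rfl] at this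
    rw [this]
    exact h1
  have : (⇑ψN)^[n₀] z ∈ CN := h2
  rw [hz] at this
  exact this

theorem mem_of_psi_iterate_mem [IsNoetherianRing R] (σ : R ≃+* R) (ψ : M →+ M)
    (hsemi : ∀ (w : R) (x : M), ψ (σ w • x) = w • ψ x)
    (N : Submodule R M) (hfg : N.FG) (hbij : Set.BijOn ψ N N)
    (T : Submodule R M) (hT : ∀ x ∈ T, ψ x ∈ T) :
    ∀ (m : ℕ) (y : M), y ∈ N → (⇑ψ)^[m] y ∈ T → y ∈ T := by
  intro m
  induction m with
  | zero => intro y _ h; exact h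
  | succ m ih =>
    intro y hy h
    rw [Function.iterate_succ_apply] at h
    exact mem_of_psi_mem σ ψ hsemi N hfg hbij T hT y hy (ih (ψ y) (hbij.mapsTo hy) h)


theorem chevalley {R : Type*} [CommRing R] (t : R) (hmax : (Ideal.span {t}).IsMaximal)
    (hprec : ∀ f : ℕ → R, (∀ j, t ^ j ∣ f (j + 1) - f j) → ∃ L, ∀ j, t ^ j ∣ L - f j)
    {V : Type*} [AddCommGroup V] [Module R V] [Module.Finite R V]
    (C : ℕ → Submodule R V) (hanti : ∀ {i j : ℕ}, i ≤ j → C j ≤ C i)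
    (hclosed : ∀ (i : ℕ) (y : V), (∀ κ, ∃ c ∈ C i, ∃ z, y - c = t ^ κ • z) → y ∈ C i)
    (hsep : ∀ y : V, (∀ i, y ∈ C i) → y = 0) (j : ℕ) :
    ∃ κ, ∀ y ∈ C κ, ∃ z : V, y = t ^ j • z := by
  by_contra hcon
  push_neg at hcon
  set P : ℕ → Submodule R V := fun s => LinearMap.range (LinearMap.lsmul R V (t ^ s)) with hP
  have hPmem : ∀ (s : ℕ) (x : V), x ∈ P s ↔ ∃ z, x = t ^ s • z := by
    intro s x
    constructor
    · rintro ⟨z, rfl⟩; exact ⟨z, rfl⟩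
    · rintro ⟨z, rfl⟩; exact ⟨z, rfl⟩
  have hPmono : ∀ {s s' : ℕ}, s ≤ s' → P s' ≤ P s := by
    intro s s' hss x hx
    rw [hPmem] at hx ⊢
    obtain ⟨z, rfl⟩ := hx
    exact ⟨t ^ (s' - s) • z, by rw [smul_smul, ← pow_add, Nat.add_sub_cancel' hss]⟩
  -- stabilization of images in the artinian quotients
  have hart : ∀ κ : ℕ, IsArtinian R (V ⧸ P κ) := by
    intro κ
    refine isArtinian_of_torsionBy_pow_maximal hmax κ _ _ _
      (Module.Finite.of_surjective ((P κ).mkQ) (Submodule.mkQ_surjective _)) ?_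
    intro q
    obtain ⟨v, rfl⟩ := Submodule.mkQ_surjective (P κ) q
    rw [← map_smul, Submodule.mkQ_apply, Submodule.Quotient.mk_eq_zero]
    exact ⟨v, rfl⟩
  have hstab : ∀ κ : ℕ, ∃ i₀, ∀ i, i₀ ≤ i →
      (C i).map (P κ).mkQ = (C i₀).map (P κ).mkQ := by
    intro κ
    haveI := hart κ
    obtain ⟨i₀, hi₀⟩ := IsArtinian.monotone_stabilizes
      (⟨fun i => OrderDual.toDual ((C i).map (P κ).mkQ),
        fun i i' hii' => Submodule.map_mono (hanti hii')⟩ : ℕ →o (Submodule R (V ⧸ P κ))ᵒᵈ)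
    exact ⟨i₀, fun i hi => congrArg OrderDual.ofDual (hi₀ i hi).symm⟩
  choose I hI using hstab
  have key : ∀ (κ i : ℕ), C (I κ) ≤ C i ⊔ P κ := by
    intro κ i
    rcases le_total i (I κ) with h | h
    · exact (hanti h).trans le_sup_left
    · have hmap : (C (I κ)).map (P κ).mkQ = (C i).map (P κ).mkQ := (hI κ i h).symm
      calc C (I κ) ≤ Submodule.comap (P κ).mkQ ((C (I κ)).map (P κ).mkQ) :=
              Submodule.le_comap_map _ _
        _ = Submodule.comap (P κ).mkQ ((C i).map (P κ).mkQ) := by rw [hmap]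
        _ = C i ⊔ P κ := by rw [Submodule.comap_map_eq, Submodule.ker_mkQ]
  -- a bad element
  obtain ⟨y₀, hy₀C, hy₀P⟩ := hcon (I j)
  have hy₀P' : y₀ ∉ P j := by
    rw [hPmem]
    rintro ⟨z, hz⟩
    exact hy₀P z hz
  -- the recursively chosen sequence
  have step : ∀ (s : ℕ) (v : V), v ∈ C (I (j + s)) →
      ∃ c, c ∈ C (I (j + s + 1)) ∧ v - c ∈ P (j + s) := by
    intro s v hv
    have h1 : v ∈ C (I (j + s + 1)) ⊔ P (j + s) := key (j + s) (I (j + s + 1)) hv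
    rw [Submodule.mem_sup] at h1
    obtain ⟨c, hc, q, hq, hsum⟩ := h1
    exact ⟨c, hc, by rw [← hsum]; simpa using hq⟩
  choose next hnext1 hnext2 using step
  let b' : ∀ s : ℕ, {v : V // v ∈ C (I (j + s))} := fun s =>
    Nat.rec ⟨y₀, hy₀C⟩ (fun s prev => ⟨next s prev.1 prev.2, hnext1 s prev.1 prev.2⟩) s
  set b : ℕ → V := fun s => (b' s).1 with hb
  have hbC : ∀ s, b s ∈ C (I (j + s)) := fun s => (b' s).2
  have hbinc : ∀ s, b s - b (s + 1) ∈ P (j + s) := fun s => hnext2 s (b s) (hbC s)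
  have hwex : ∀ s, ∃ wz, b (s + 1) - b s = t ^ (j + s) • wz := by
    intro s
    obtain ⟨wz, hwz⟩ := (hPmem _ _).mp (hbinc s)
    exact ⟨-wz, by rw [smul_neg, ← hwz]; abel⟩
  choose w hwspec using hwex
  set f : ℕ → V := fun s => ∑ u ∈ Finset.range s, t ^ u • w u with hf
  have hbf : ∀ s, b s = b 0 + t ^ j • f s := by
    intro s
    induction s with
    | zero => simp [hf]
    | succ s ih =>
      have : b (s + 1) = b s + t ^ (j + s) • w s := by
        have h4 := hwspec s
        rw [sub_eq_iff_eq_add] at h4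
        rw [h4]; abel
      rw [this, ih]
      simp only [hf]
      rw [Finset.sum_range_succ, smul_add, pow_add, mul_smul]
      abel
  obtain ⟨L, hL⟩ := module_precomplete t hprec f
    (fun s => ⟨w s, by rw [hf]; simp [Finset.sum_range_succ]⟩)
  set ystar : V := b 0 + t ^ j • L with hystar
  have hybs : ∀ s, ystar - b s ∈ P (j + s) := by
    intro s
    obtain ⟨z, hz⟩ := hL s
    rw [hPmem]
    refine ⟨z, ?_⟩
    rw [hystar, hbf s, pow_add, mul_smul]
    rw [show b 0 + t ^ j • L - (b 0 + t ^ j • f s) = t ^ j • (L - f s) by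
      rw [smul_sub]; abel, hz]
  have hyC : ∀ i, ystar ∈ C i := by
    intro i
    apply hclosed
    intro κ
    have h1 : b κ ∈ C i ⊔ P (j + κ) := key (j + κ) i (hbC κ)
    rw [Submodule.mem_sup] at h1
    obtain ⟨c, hc, q, hq, hsum⟩ := h1
    refine ⟨c, hc, ?_⟩
    have h2 : ystar - c = (ystar - b κ) + q := by rw [← hsum]; abel
    have h3 : ystar - c ∈ P κ := by
      rw [h2]
      exact (P κ).add_mem (hPmono (by omega) (hybs κ)) (hPmono (by omega) hq)
    exact (hPmem _ _).mp h3
  have hzero : ystar = 0 := hsep _ hyC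
  have : y₀ ∈ P j := by
    have h0 := hybs 0
    rw [hzero] at h0
    have : b 0 ∈ P (j + 0) := by
      have := (P (j + 0)).neg_mem h0
      simpa using this
    have h' : b 0 ∈ P j := by simpa using this
    exact h'
  exact hy₀P' this


end Aux

theorem unique_psi_decomposition (p r : ℕ) [Fact p.Prime]
    (k : Type*) [Field k] [IsAlgClosed k] [CharP k p]
    (I : Ideal (RestrictedPS p (WittVector p k) r))
    (φ : (RestrictedPS p (WittVector p k) r ⧸ I) →+*
      (RestrictedPS p (WittVector p k) r ⧸ I))
    (hφW : ∀ w : WittVector p k,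
      φ (algebraMap (WittVector p k) (RestrictedPS p (WittVector p k) r ⧸ I) w) =
        algebraMap (WittVector p k) (RestrictedPS p (WittVector p k) r ⧸ I)
          (WittVector.frobenius w))
    (hφp : ∀ a, ∃ c, φ a = a ^ p + (p : RestrictedPS p (WittVector p k) r ⧸ I) * c)
    (M : Type*) [AddCommGroup M]
    [Module (RestrictedPS p (WittVector p k) r ⧸ I) M]
    [Module (WittVector p k) M]
    [IsScalarTower (WittVector p k) (RestrictedPS p (WittVector p k) r ⧸ I) M]
    [Module.Finite (RestrictedPS p (WittVector p k) r ⧸ I) M]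
    [IsAdicComplete (Ideal.span {(p : RestrictedPS p (WittVector p k) r ⧸ I)}) M]
    (ψ : M →+ M)
    (hψ : ∀ (a : RestrictedPS p (WittVector p k) r ⧸ I) (x : M),
      ψ (φ a • x) = a • ψ x)
    -- `M♯`, the unique `W`-submodule furnished by Statement 9:
    (N : Submodule (WittVector p k) M) (hNfg : N.FG) (hNbij : Set.BijOn ψ N N)
    (hNlim : ∀ (x : M) (κ : ℕ), 1 ≤ κ → ∃ n₀ : ℕ, ∀ n ≥ n₀, ∃ y ∈ N, ∃ z : M,
      (⇑ψ)^[n] x = y + (p : RestrictedPS p (WittVector p k) r ⧸ I) ^ κ • z)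
    -- an additive map `φ_M` with `ψ ∘ φ_M = id_M`:
    (φM : M →+ M) (hφM : ∀ x : M, ψ (φM x) = x) :
    ∀ x : M, ∃! c : ℕ → M,
      c 0 ∈ N ∧
      (∀ i : ℕ, 1 ≤ i → ψ (c i) = 0) ∧
      -- `c_i → 0` `p`-adically:
      (∀ κ : ℕ, ∃ n₀ : ℕ, ∀ i ≥ n₀, ∃ z : M,
        c i = (p : RestrictedPS p (WittVector p k) r ⧸ I) ^ κ • z) ∧
      -- `x = c₀ + ∑_{i ≥ 1} φ_M^{i-1}(c_i)`, the series converging `p`-adically: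
      (∀ κ : ℕ, ∃ n₀ : ℕ, ∀ m ≥ n₀, ∃ z : M,
        x - (c 0 + ∑ i ∈ Finset.Icc 1 m, (⇑φM)^[i - 1] (c i)) =
          (p : RestrictedPS p (WittVector p k) r ⧸ I) ^ κ • z) := by
  intro x
  -- instances and basic facts about W = W(k)
  haveI hDVR : IsDiscreteValuationRing (WittVector p k) :=
    WittVector.isDiscreteValuationRing (p := p) (k := k)
  haveI hNoeth : IsNoetherianRing (WittVector p k) := inferInstance
  have hmax : (Ideal.span {((p : ℕ) : WittVector p k)}).IsMaximal :=
    PrincipalIdealRing.isMaximal_of_irreducible (WittVector.irreducible p)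
  have hprec : ∀ f : ℕ → WittVector p k,
      (∀ j, ((p : ℕ) : WittVector p k) ^ j ∣ f (j + 1) - f j) →
      ∃ L, ∀ j, ((p : ℕ) : WittVector p k) ^ j ∣ L - f j :=
    fun f hf => Aux.witt_precomplete f hf
  -- semilinearity of ψ over W
  have hsemiW : ∀ (w : WittVector p k) (v : M),
      ψ ((WittVector.frobeniusEquiv p k w) • v) = w • ψ v := by
    intro w v
    have h1 : (WittVector.frobeniusEquiv p k w) • v =
        (algebraMap (WittVector p k) (RestrictedPS p (WittVector p k) r ⧸ I)
          (WittVector.frobenius w)) • v := by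
      rw [WittVector.frobeniusEquiv_apply, algebraMap_smul]
    rw [h1, ← hφW w, hψ, algebraMap_smul]
  -- the submodules of p-power divisible elements
  have hsmulcomm : ∀ (n : ℕ) (w : WittVector p k) (z : M), n • (w • z) = w • (n • z) :=
    fun n w z => smul_comm n w z
  let pd : ℕ → Submodule (WittVector p k) M := fun κ =>
    { carrier := {v : M | ∃ z : M, v = (p ^ κ : ℕ) • z}
      add_mem' := by rintro a b ⟨z1, rfl⟩ ⟨z2, rfl⟩; exact ⟨z1 + z2, (smul_add _ _ _).symm⟩
      zero_mem' := ⟨0, (smul_zero _).symm⟩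
      smul_mem' := by rintro w v ⟨z, rfl⟩; exact ⟨w • z, (hsmulcomm _ _ _).symm⟩ }
  have hpdmem : ∀ (κ : ℕ) (v : M), v ∈ pd κ ↔ ∃ z : M, v = (p ^ κ : ℕ) • z := fun κ v => Iff.rfl
  have hnsA : ∀ (κ : ℕ) (z : M),
      ((p : ℕ) : RestrictedPS p (WittVector p k) r ⧸ I) ^ κ • z = (p ^ κ : ℕ) • z := by
    intro κ z; rw [← Nat.cast_pow, Nat.cast_smul_eq_nsmul]
  have hnsW : ∀ (κ : ℕ) (z : M),
      ((p : ℕ) : WittVector p k) ^ κ • z = (p ^ κ : ℕ) • z := by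
    intro κ z; rw [← Nat.cast_pow, Nat.cast_smul_eq_nsmul]
  have hpdA : ∀ (κ : ℕ) (v : M), v ∈ pd κ ↔
      ∃ z : M, v = ((p : ℕ) : RestrictedPS p (WittVector p k) r ⧸ I) ^ κ • z := by
    intro κ v
    rw [hpdmem]
    constructor
    · rintro ⟨z, rfl⟩; exact ⟨z, by rw [hnsA]⟩
    · rintro ⟨z, rfl⟩; exact ⟨z, by rw [hnsA]⟩
  have hpdmono : ∀ {κ κ' : ℕ}, κ ≤ κ' → pd κ' ≤ pd κ := by
    intro κ κ' h v hv
    obtain ⟨z, rfl⟩ := hv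
    exact ⟨(p ^ (κ' - κ) : ℕ) • z, by
      rw [← mul_smul, ← pow_add, Nat.add_sub_cancel' h]⟩
  have hψpd : ∀ (κ : ℕ) (v : M), v ∈ pd κ → ψ v ∈ pd κ := by
    rintro κ v ⟨z, rfl⟩; exact ⟨ψ z, map_nsmul ψ _ _⟩
  have hψiterpd : ∀ (m κ : ℕ) (v : M), v ∈ pd κ → (⇑ψ)^[m] v ∈ pd κ := by
    rintro m κ v ⟨z, rfl⟩; exact ⟨(⇑ψ)^[m] z, iterate_map_nsmul ψ m z _⟩
  have hφMiterpd : ∀ (m κ : ℕ) (v : M), v ∈ pd κ → (⇑φM)^[m] v ∈ pd κ := by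
    rintro m κ v ⟨z, rfl⟩; exact ⟨(⇑φM)^[m] z, iterate_map_nsmul φM m z _⟩
  have hφMpd : ∀ (κ : ℕ) (v : M), v ∈ pd κ → φM v ∈ pd κ := fun κ v hv => hφMiterpd 1 κ v hv
  -- Hausdorff property
  have hHaus : ∀ v : M, (∀ κ, v ∈ pd κ) → v = 0 := by
    intro v hv
    haveI inst : IsHausdorff
        (Ideal.span {((p : ℕ) : RestrictedPS p (WittVector p k) r ⧸ I)}) M :=
      (inferInstance : IsAdicComplete _ M).toIsHausdorff
    apply inst.haus v
    intro n
    rw [SModEq.zero]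
    obtain ⟨z, hz⟩ := (hpdA n v).mp (hv n)
    rw [Ideal.span_singleton_pow, hz]
    exact Submodule.smul_mem_smul (Ideal.mem_span_singleton_self _) Submodule.mem_top
  -- Lemma A specialization
  have hLemA : ∀ (κ m : ℕ) (v : M), v ∈ N → (⇑ψ)^[m] v ∈ pd κ → v ∈ pd κ := by
    intro κ m v hvN hvm
    exact Aux.mem_of_psi_iterate_mem (WittVector.frobeniusEquiv p k) ψ hsemiW N hNfg hNbij
      (pd κ) (hψpd κ) m v hvN hvm
  -- ψ as an equiv of N
  have hmaps : ∀ y : N, ψ (y : M) ∈ N := fun y => hNbij.mapsTo y.2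
  let ψN : N →+ N := AddMonoidHom.mk' (fun y => ⟨ψ y, hmaps y⟩)
    (fun a b => Subtype.ext (by simp [map_add]))
  have hψNcoe : ∀ (y : N), ((ψN y : N) : M) = ψ (y : M) := fun y => rfl
  have hψNbij : Function.Bijective ψN := by
    constructor
    · intro a b hab
      exact Subtype.ext (hNbij.injOn a.2 b.2 (congrArg Subtype.val hab))
    · rintro ⟨b, hb⟩
      obtain ⟨a, ha, hab⟩ := hNbij.surjOn hb
      exact ⟨⟨a, ha⟩, Subtype.ext hab⟩
  let eN : N ≃+ N := AddEquiv.ofBijective ψN hψNbij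
  have heN : ∀ y : N, eN y = ψN y := fun y => rfl
  have hcoeiter : ∀ (t : ℕ) (y : N), (((⇑ψN)^[t] y : N) : M) = (⇑ψ)^[t] (y : M) := by
    intro t
    induction t with
    | zero => intro y; rfl
    | succ t ih =>
      intro y
      rw [Function.iterate_succ_apply, ih (ψN y), hψNcoe, ← Function.iterate_succ_apply]
  have hcancel : ∀ (m : ℕ) (Y : N), (⇑ψN)^[m] ((⇑eN.symm)^[m] Y) = Y := by
    intro m Y
    have h1 : Function.LeftInverse (⇑eN) (⇑eN.symm) := fun y => eN.apply_symm_apply y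
    have h2 := Function.LeftInverse.iterate h1 m
    have h3 : (⇑eN)^[m] = (⇑ψN)^[m] := by
      congr 1
    rw [← h3]
    exact h2 Y
  -- approximations at every level
  have approx : ∀ κ : ℕ, ∃ e : M, e ∈ N ∧ ∃ n₀, ∀ m ≥ n₀,
      (⇑ψ)^[m] x - (⇑ψ)^[m] e ∈ pd κ := by
    intro κ
    obtain ⟨n₀, hn₀⟩ := hNlim x (max 1 κ) (le_max_left _ _)
    obtain ⟨y, hyN, z, hyz⟩ := hn₀ n₀ le_rfl
    refine ⟨(((⇑eN.symm)^[n₀] ⟨y, hyN⟩ : N) : M), Submodule.coe_mem _, n₀, ?_⟩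
    intro m hm
    have h1 : (⇑ψ)^[m] ((((⇑eN.symm)^[n₀] ⟨y, hyN⟩ : N) : M)) = (⇑ψ)^[m - n₀] y := by
      rw [← hcoeiter]
      have h2 : (⇑ψN)^[m] ((⇑eN.symm)^[n₀] ⟨y, hyN⟩) =
          (⇑ψN)^[m - n₀] ((⇑ψN)^[n₀] ((⇑eN.symm)^[n₀] ⟨y, hyN⟩)) := by
        rw [← Function.iterate_add_apply]
        congr 1
        omega
      rw [h2, hcancel, hcoeiter]
    rw [h1]
    have h3 : (⇑ψ)^[m] x = (⇑ψ)^[m - n₀] ((⇑ψ)^[n₀] x) := by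
      rw [← Function.iterate_add_apply]
      congr 1
      omega
    rw [h3, ← iterate_map_sub]
    apply hψiterpd
    apply hpdmono (le_max_right 1 κ)
    rw [hpdA]
    exact ⟨z, by rw [hyz]; abel⟩
  choose e heN' he using approx
  choose nf hnf using he
  -- differences of approximations
  have hediff : ∀ κ κ' : ℕ, κ ≤ κ' → e κ' - e κ ∈ pd κ := by
    intro κ κ' hκ
    have hmemN : e κ' - e κ ∈ N := N.sub_mem (heN' κ') (heN' κ)
    set m := max (nf κ) (nf κ') with hm
    have h1 := hnf κ m (le_max_left _ _)
    have h2 := hnf κ' m (le_max_right _ _)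
    have h3 : (⇑ψ)^[m] (e κ' - e κ) ∈ pd κ := by
      rw [iterate_map_sub]
      have h4 : (⇑ψ)^[m] (e κ') - (⇑ψ)^[m] (e κ) =
          ((⇑ψ)^[m] x - (⇑ψ)^[m] (e κ)) - ((⇑ψ)^[m] x - (⇑ψ)^[m] (e κ')) := by abel
      rw [h4]
      exact (pd κ).sub_mem h1 (hpdmono hκ h2)
    exact hLemA κ m _ hmemN h3
  -- Chevalley for the chain N ∩ pd κ
  haveI hNfin : Module.Finite (WittVector p k) N := Module.Finite.iff_fg.mpr hNfg
  let CN : ℕ → Submodule (WittVector p k) N := fun κ => (pd κ).comap N.subtype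
  have hCNanti : ∀ {i j : ℕ}, i ≤ j → CN j ≤ CN i := fun hij y hy => hpdmono hij hy
  have hchev : ∀ j, ∃ κ, ∀ y ∈ CN κ, ∃ z : N, y = ((p : ℕ) : WittVector p k) ^ j • z := by
    apply Aux.chevalley ((p : ℕ) : WittVector p k) hmax hprec CN (fun hij => hCNanti hij)
    · intro i y hy
      obtain ⟨c, hc, z, hz⟩ := hy i
      show (y : M) ∈ pd i
      have hz' : (y : M) - (c : M) = ((p : ℕ) : WittVector p k) ^ i • (z : M) := by
        have := congrArg (Subtype.val : N → M) hz
        simpa using this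
      have : (y : M) = (c : M) + (p ^ i : ℕ) • (z : M) := by
        rw [← hnsW, ← hz']; abel
      rw [this]
      exact (pd i).add_mem hc ⟨(z : M), rfl⟩
    · intro y hy
      apply Subtype.ext
      apply hHaus
      intro κ
      exact hy κ
  choose g0 hg0 using hchev
  -- a monotone increasing selection
  let g : ℕ → ℕ := fun j => Nat.rec (g0 0) (fun j prev => max (g0 (j + 1)) (prev + 1)) j
  have hgsucc : ∀ j, g (j + 1) = max (g0 (j + 1)) (g j + 1) := fun j => rfl
  have hgmono : ∀ j, g j < g (j + 1) := by
    intro j; rw [hgsucc]; omega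
  have hg0le : ∀ j, g0 j ≤ g j := by
    intro j
    cases j with
    | zero => exact le_refl _
    | succ j => rw [hgsucc]; omega
  have hgle : ∀ {i j : ℕ}, i ≤ j → g i ≤ g j := by
    intro i j hij
    induction j with
    | zero => interval_cases i; omega
    | succ j ih =>
      rcases Nat.lt_or_ge i (j + 1) with h | h
      · exact le_trans (ih (by omega)) (le_of_lt (hgmono j))
      · have : i = j + 1 := by omega
        subst this; exact le_refl _
  have hgj : ∀ j, j ≤ g j := by
    intro j
    induction j with
    | zero => omega
    | succ j ih => have := hgmono j; omega
  -- the Cauchy sequence in N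
  let ε : ℕ → N := fun j => ⟨e (g j), heN' _⟩
  have hεinc : ∀ j, ∃ z : N, ε (j + 1) - ε j = ((p : ℕ) : WittVector p k) ^ j • z := by
    intro j
    have h1 : (e (g (j + 1)) - e (g j)) ∈ pd (g j) :=
      hediff _ _ (le_of_lt (hgmono j))
    have h2 : (ε (j + 1) - ε j : N) ∈ CN (g j) := h1
    have h3 : (ε (j + 1) - ε j : N) ∈ CN (g0 j) := hCNanti (hg0le j) h2
    exact hg0 j _ h3
  obtain ⟨Λ, hΛ⟩ := Aux.module_precomplete ((p : ℕ) : WittVector p k) hprec ε hεinc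
  -- the good element c₀
  set c0 : M := (Λ : M) with hc0def
  have hc0N : c0 ∈ N := Λ.2
  have hGood : ∀ κ, ∃ n₀, ∀ m ≥ n₀, (⇑ψ)^[m] x - (⇑ψ)^[m] c0 ∈ pd κ := by
    intro κ
    obtain ⟨z, hz⟩ := hΛ κ
    have hdiffc0 : c0 - e (g κ) ∈ pd κ := by
      have := congrArg (Subtype.val : N → M) hz
      simp only [AddSubgroupClass.coe_sub, SetLike.val_smul] at this
      rw [hnsW] at this
      exact ⟨(z : M), this⟩
    refine ⟨nf (g κ), fun m hm => ?_⟩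
    have h1 : (⇑ψ)^[m] x - (⇑ψ)^[m] (e (g κ)) ∈ pd κ :=
      hpdmono (le_trans (hgj κ) (le_refl _)) (hnf (g κ) m hm)
    have h2 : (⇑ψ)^[m] c0 - (⇑ψ)^[m] (e (g κ)) ∈ pd κ := by
      rw [← iterate_map_sub]
      exact hψiterpd m κ _ hdiffc0
    have h3 : (⇑ψ)^[m] x - (⇑ψ)^[m] c0 =
        ((⇑ψ)^[m] x - (⇑ψ)^[m] (e (g κ))) - ((⇑ψ)^[m] c0 - (⇑ψ)^[m] (e (g κ))) := by abel
    rw [h3]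
    exact (pd κ).sub_mem h1 h2

  -- the decomposition
  set x' : M := x - c0 with hx'def
  have hx'gd : ∀ κ, ∃ n₀, ∀ m ≥ n₀, (⇑ψ)^[m] x' ∈ pd κ := by
    intro κ
    obtain ⟨n₀, h⟩ := hGood κ
    exact ⟨n₀, fun m hm => by rw [hx'def, iterate_map_sub]; exact h m hm⟩
  let c : ℕ → M := fun i => Nat.casesOn i c0 (fun n => (⇑ψ)^[n] x' - φM ((⇑ψ)^[n + 1] x'))
  have hc0 : c 0 = c0 := rfl
  have hcsucc : ∀ n : ℕ, c (n + 1) = (⇑ψ)^[n] x' - φM ((⇑ψ)^[n + 1] x') := fun n => rfl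
  have prop2 : ∀ i : ℕ, 1 ≤ i → ψ (c i) = 0 := by
    intro i hi
    obtain ⟨n, rfl⟩ : ∃ n, i = n + 1 := ⟨i - 1, by omega⟩
    rw [hcsucc, map_sub, hφM, ← Function.iterate_succ_apply' ψ, sub_self]
  have prop3 : ∀ κ : ℕ, ∃ n₀ : ℕ, ∀ i ≥ n₀, c i ∈ pd κ := by
    intro κ
    obtain ⟨n₀, h⟩ := hx'gd κ
    refine ⟨n₀ + 1, fun i hi => ?_⟩
    obtain ⟨n, rfl⟩ : ∃ n, i = n + 1 := ⟨i - 1, by omega⟩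
    rw [hcsucc]
    exact (pd κ).sub_mem (h n (by omega)) (hφMpd κ _ (h (n + 1) (by omega)))
  have hpartial : ∀ m : ℕ, x - (c 0 + ∑ i ∈ Finset.Icc 1 m, (⇑φM)^[i - 1] (c i)) =
      (⇑φM)^[m] ((⇑ψ)^[m] x') := by
    intro m
    induction m with
    | zero =>
      rw [Finset.Icc_eq_empty (by omega : ¬(1 : ℕ) ≤ 0), Finset.sum_empty, hc0]
      show x - (c0 + 0) = x'
      rw [hx'def]; abel
    | succ m ih =>
      rw [Finset.sum_Icc_succ_top (by omega : 1 ≤ m + 1)]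
      have h1 : (⇑φM)^[m + 1 - 1] (c (m + 1)) =
          (⇑φM)^[m] ((⇑ψ)^[m] x') - (⇑φM)^[m + 1] ((⇑ψ)^[m + 1] x') := by
        rw [show m + 1 - 1 = m from rfl, hcsucc, iterate_map_sub,
          ← Function.iterate_succ_apply φM]
      have h2 : x - (c 0 + (∑ i ∈ Finset.Icc 1 m, (⇑φM)^[i - 1] (c i) +
            (⇑φM)^[m + 1 - 1] (c (m + 1)))) =
          (x - (c 0 + ∑ i ∈ Finset.Icc 1 m, (⇑φM)^[i - 1] (c i))) -
            (⇑φM)^[m + 1 - 1] (c (m + 1)) := by abel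
      rw [h2, ih, h1]
      abel
  have prop4 : ∀ κ : ℕ, ∃ n₀ : ℕ, ∀ m ≥ n₀,
      (x - (c 0 + ∑ i ∈ Finset.Icc 1 m, (⇑φM)^[i - 1] (c i))) ∈ pd κ := by
    intro κ
    obtain ⟨n₀, h⟩ := hx'gd κ
    exact ⟨n₀, fun m hm => by rw [hpartial]; exact hφMiterpd m κ _ (h m hm)⟩
  refine ⟨c, ⟨hc0 ▸ hc0N, prop2, ?_, ?_⟩, ?_⟩
  · intro κ
    obtain ⟨n₀, h⟩ := prop3 κ
    exact ⟨n₀, fun i hi => (hpdA κ _).mp (h i hi)⟩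
  · intro κ
    obtain ⟨n₀, h⟩ := prop4 κ
    exact ⟨n₀, fun m hm => (hpdA κ _).mp (h m hm)⟩
  -- uniqueness
  rintro c' ⟨h0', h1', _h2', h3'⟩
  have hc0N' : c 0 ∈ N := hc0 ▸ hc0N
  set d : ℕ → M := fun i => c' i - c i with hddef
  have hd0N : d 0 ∈ N := N.sub_mem h0' hc0N'
  have hdψ : ∀ i, 1 ≤ i → ψ (d i) = 0 := by
    intro i hi
    rw [hddef]
    show ψ (c' i - c i) = 0
    rw [map_sub, h1' i hi, prop2 i hi, sub_self]
  set Sm : ℕ → M := fun m => d 0 + ∑ i ∈ Finset.Icc 1 m, (⇑φM)^[i - 1] (d i) with hSmdef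
  have hdS : ∀ κ, ∃ n₀, ∀ m ≥ n₀, Sm m ∈ pd κ := by
    intro κ
    obtain ⟨n₁, h1⟩ := h3' κ
    obtain ⟨n₂, h2⟩ := prop4 κ
    refine ⟨max n₁ n₂, fun m hm => ?_⟩
    obtain ⟨z1, hz1⟩ := h1 m (le_trans (le_max_left _ _) hm)
    have hm1 : (x - (c' 0 + ∑ i ∈ Finset.Icc 1 m, (⇑φM)^[i - 1] (c' i))) ∈ pd κ :=
      (hpdA κ _).mpr ⟨z1, hz1⟩
    have hm2 := h2 m (le_trans (le_max_right _ _) hm)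
    have hsum : ∑ i ∈ Finset.Icc 1 m, (⇑φM)^[i - 1] (d i)
        = ∑ i ∈ Finset.Icc 1 m, ((⇑φM)^[i - 1] (c' i) - (⇑φM)^[i - 1] (c i)) :=
      Finset.sum_congr rfl (fun i _ => iterate_map_sub φM _ _ _)
    have heq : Sm m =
        (x - (c 0 + ∑ i ∈ Finset.Icc 1 m, (⇑φM)^[i - 1] (c i))) -
          (x - (c' 0 + ∑ i ∈ Finset.Icc 1 m, (⇑φM)^[i - 1] (c' i))) := by
      rw [hSmdef]
      show d 0 + ∑ i ∈ Finset.Icc 1 m, (⇑φM)^[i - 1] (d i) = _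
      rw [hsum, Finset.sum_sub_distrib, hddef]
      show c' 0 - c 0 + _ = _
      abel
    rw [heq]
    exact (pd κ).sub_mem hm2 hm1
  -- iterate interplay
  have hiter1 : ∀ (b a : ℕ) (y : M), b ≤ a → (⇑ψ)^[a] ((⇑φM)^[b] y) = (⇑ψ)^[a - b] y := by
    intro b
    induction b with
    | zero => intro a y _; rfl
    | succ b ih =>
      intro a y hba
      rw [Function.iterate_succ_apply φM, ih a (φM y) (by omega)]
      have h2 : a - b = (a - (b + 1)) + 1 := by omega
      rw [h2, Function.iterate_succ_apply, hφM]
  have hiter2 : ∀ (a b : ℕ) (y : M), a ≤ b → (⇑ψ)^[a] ((⇑φM)^[b] y) = (⇑φM)^[b - a] y := by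
    intro a
    induction a with
    | zero => intro b y _; rfl
    | succ a ih =>
      intro b y hab
      rw [Function.iterate_succ_apply ψ]
      have hb : b = (b - 1) + 1 := by omega
      rw [hb, Function.iterate_succ_apply' φM, hφM, ih (b - 1) y (by omega)]
      congr 1
      omega
  let Ψh : ℕ → M →+ M := fun n => AddMonoidHom.mk' ((⇑ψ)^[n])
    (fun u v => iterate_map_add ψ n u v)
  have hclaim : ∀ (t m : ℕ), (⇑ψ)^[t] (Sm m) =
      (⇑ψ)^[t] (d 0) + ∑ i ∈ Finset.Icc (t + 1) m, (⇑φM)^[i - (t + 1)] (d i) := by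
    intro t m
    rw [hSmdef]
    show (⇑ψ)^[t] (d 0 + ∑ i ∈ Finset.Icc 1 m, (⇑φM)^[i - 1] (d i)) = _
    rw [iterate_map_add]
    congr 1
    have hmap : (⇑ψ)^[t] (∑ i ∈ Finset.Icc 1 m, (⇑φM)^[i - 1] (d i)) =
        ∑ i ∈ Finset.Icc 1 m, (⇑ψ)^[t] ((⇑φM)^[i - 1] (d i)) :=
      map_sum (Ψh t) _ _
    rw [hmap]
    have hpt : ∀ i ∈ Finset.Icc 1 m, (⇑ψ)^[t] ((⇑φM)^[i - 1] (d i)) =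
        if t + 1 ≤ i then (⇑φM)^[i - (t + 1)] (d i) else 0 := by
      intro i hi
      rw [Finset.mem_Icc] at hi
      by_cases hti : t + 1 ≤ i
      · rw [if_pos hti, hiter2 t (i - 1) (d i) (by omega)]
        congr 1
        omega
      · rw [if_neg hti, hiter1 (i - 1) t (d i) (by omega)]
        have h5 : t - (i - 1) = (t - i) + 1 := by omega
        rw [h5, Function.iterate_succ_apply, hdψ i (by omega), iterate_map_zero]
    rw [Finset.sum_congr rfl hpt, ← Finset.sum_filter]
    congr 1
    ext a
    simp only [Finset.mem_filter, Finset.mem_Icc]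
    omega
  have hd0 : d 0 = 0 := by
    apply hHaus
    intro κ
    obtain ⟨n₀, h⟩ := hdS κ
    have h1 : (⇑ψ)^[n₀] (Sm n₀) ∈ pd κ := hψiterpd n₀ κ _ (h n₀ le_rfl)
    rw [hclaim n₀ n₀, Finset.Icc_eq_empty (by omega : ¬n₀ + 1 ≤ n₀), Finset.sum_empty,
      add_zero] at h1
    exact hLemA κ n₀ (d 0) hd0N h1
  have hdj : ∀ j, d j = 0 := by
    intro j
    rcases Nat.eq_zero_or_pos j with rfl | hj
    · exact hd0
    apply hHaus
    intro κ
    obtain ⟨n₀, h⟩ := hdS κ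
    set m := max n₀ j with hmdef
    have hSmpd : Sm m ∈ pd κ := h m (le_max_left _ _)
    have hA : (⇑ψ)^[j - 1] (Sm m) = ∑ i ∈ Finset.Icc j m, (⇑φM)^[i - j] (d i) := by
      rw [hclaim (j - 1) m, hd0, iterate_map_zero, zero_add]
      have : j - 1 + 1 = j := by omega
      rw [this]
    have hB : φM ((⇑ψ)^[j] (Sm m)) = ∑ i ∈ Finset.Icc (j + 1) m, (⇑φM)^[i - j] (d i) := by
      rw [hclaim j m, hd0, iterate_map_zero, zero_add, map_sum]
      refine Finset.sum_congr rfl (fun i hi => ?_)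
      rw [Finset.mem_Icc] at hi
      have h6 : i - j = (i - (j + 1)) + 1 := by omega
      rw [h6, Function.iterate_succ_apply' φM]
    have hkey : (⇑ψ)^[j - 1] (Sm m) - φM ((⇑ψ)^[j] (Sm m)) = d j := by
      rw [hA, hB]
      have hsplit : ∑ i ∈ Finset.Icc j m, (⇑φM)^[i - j] (d i) =
          (⇑φM)^[j - j] (d j) + ∑ i ∈ Finset.Icc (j + 1) m, (⇑φM)^[i - j] (d i) := by
        have hins : Finset.Icc j m = insert j (Finset.Icc (j + 1) m) := by
          ext a
          simp only [Finset.mem_Icc, Finset.mem_insert]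
          omega
        rw [hins, Finset.sum_insert (by simp [Finset.mem_Icc])]
      rw [hsplit, Nat.sub_self]
      show (⇑φM)^[0] (d j) + _ - _ = d j
      simp
    rw [← hkey]
    exact (pd κ).sub_mem (hψiterpd _ _ _ hSmpd) (hφMpd _ _ (hψiterpd _ _ _ hSmpd))
  funext i
  have h7 : d i = 0 := hdj i
  rw [hddef] at h7
  exact sub_eq_zero.mp h7
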